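/- Let 0 < ε < 1/2 and let k be a positive even integer such that q := 1/(36ε²) is a positive integer that is a power of 2, and set d := k·q = k/(36ε²). Let P = {e_1, …, e_d} ⊂ ℝ^{2d}. Suppose r_1, …, r_t ∈ ℝ^{2d} with weights w_1, …, w_t ∈ ℝ_{>0} and offset Δ ∈ ℝ form an ε-coreset with offset for k-means on P, and t < d. Then ∑_{i=1}^t w_i·‖r_i‖ ≥ d/6. -/

import Mathlib

/-- The `i`-th standard basis vector of `ℝ^{2d}` (for `i < d`). -/
noncomputable def stdBasisPt (d : ℕ) (i : Fin d) : EuclideanSpace ℝ (Fin (2 * d)) :=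
  EuclideanSpace.single (Fin.castLE (by omega) i) 1

/-- The `k`-means cost of the point set `P = {e_1, …, e_d} ⊂ ℝ^{2d}` in the set of
centers `S`: `cost(P, S) = ∑_{i} min_{s ∈ S} ‖e_i − s‖²`. -/
noncomputable def kmeansCostP (d : ℕ) (S : Finset (EuclideanSpace ℝ (Fin (2 * d)))) : ℝ :=
  ∑ i : Fin d, ⨅ s : S, ‖stdBasisPt d i - (s : EuclideanSpace ℝ (Fin (2 * d)))‖ ^ 2

/-- `r, w, Δ` form an `ε`-coreset with offset for `k`-means on `P = {e_1,…,e_d} ⊂ ℝ^{2d}`. -/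
def IsKMeansCoreset (d k t : ℕ) (ε : ℝ) (r : Fin t → EuclideanSpace ℝ (Fin (2 * d)))
    (w : Fin t → ℝ) (Δ : ℝ) : Prop :=
  ∀ S : Finset (EuclideanSpace ℝ (Fin (2 * d))), S.card = k →
    |kmeansCostP d S -
        (Δ + ∑ i, w i * ⨅ s : S, ‖r i - (s : EuclideanSpace ℝ (Fin (2 * d)))‖ ^ 2)| ≤
      ε * kmeansCostP d S

open Finset Function Real
open scoped RealInnerProductSpace BigOperators

section Aux

lemma iInf_finset_le {α : Type*} (S : Finset α) (f : α → ℝ) {x : α} (hx : x ∈ S) :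
    ⨅ y : S, f (y : α) ≤ f x :=
  ciInf_le (Set.Finite.bddBelow (Set.finite_range _)) (⟨x, hx⟩ : S)

lemma le_iInf_finset {α : Type*} (S : Finset α) (f : α → ℝ) {c : ℝ} (hS : S.Nonempty)
    (h : ∀ x ∈ S, c ≤ f x) : c ≤ ⨅ y : S, f (y : α) := by
  haveI : Nonempty S := ⟨⟨hS.choose, hS.choose_spec⟩⟩
  exact le_ciInf fun y => h y y.2

lemma iInf_finset_eq {α : Type*} (S : Finset α) (f : α → ℝ) {c : ℝ} (hS : S.Nonempty)
    (h : ∀ x ∈ S, c ≤ f x) (h2 : ∃ x ∈ S, f x ≤ c) : ⨅ y : S, f (y : α) = c := by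
  obtain ⟨x, hx, hxc⟩ := h2
  exact le_antisymm ((iInf_finset_le S f hx).trans hxc) (le_iInf_finset S f hS h)

lemma inner_single_single' {M : ℕ} (a b : Fin M) (x y : ℝ) :
    ⟪(EuclideanSpace.single a x : EuclideanSpace ℝ (Fin M)), EuclideanSpace.single b y⟫ =
      if a = b then x * y else 0 := by
  rw [EuclideanSpace.inner_single_left]
  by_cases h : a = b <;> simp [h, EuclideanSpace.single_apply, mul_comm]

lemma norm_single_sq {M : ℕ} (a : Fin M) (x : ℝ) :
    ‖(EuclideanSpace.single a x : EuclideanSpace ℝ (Fin M))‖ ^ 2 = x ^ 2 := by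
  rw [← real_inner_self_eq_norm_sq, inner_single_single']
  simp [sq]

end Aux

section Chi
variable {n : ℕ}

noncomputable def chi (x y : Fin n → ZMod 2) : ℝ := (-1 : ℝ) ^ (∑ i, (x i * y i).val)

lemma chi_eq_one_or (x y : Fin n → ZMod 2) : chi x y = 1 ∨ chi x y = -1 := by
  rcases Nat.even_or_odd (∑ i, (x i * y i).val) with h | h
  · exact Or.inl h.neg_one_pow
  · exact Or.inr h.neg_one_pow

lemma neg_one_pow_congr' {m m' : ℕ} (h : m % 2 = m' % 2) : (-1 : ℝ) ^ m = (-1) ^ m' := by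
  rcases Nat.even_or_odd m with hm | hm
  · have hm' : Even m' := by rw [Nat.even_iff] at hm ⊢; omega
    rw [hm.neg_one_pow, hm'.neg_one_pow]
  · have hm' : Odd m' := by rw [Nat.odd_iff] at hm ⊢; omega
    rw [hm.neg_one_pow, hm'.neg_one_pow]

lemma chi_mul (x x' y : Fin n → ZMod 2) : chi x y * chi x' y = chi (x + x') y := by
  unfold chi
  rw [← pow_add]
  apply neg_one_pow_congr'
  have key : ∀ i : Fin n, ((x i * y i).val + (x' i * y i).val) % 2
      = (((x + x') i) * y i).val % 2 := by
    intro i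
    have h2 : ∀ a b c : ZMod 2, ((a * c).val + (b * c).val) % 2 = ((a + b) * c).val % 2 := by
      decide
    simpa using h2 (x i) (x' i) (y i)
  rw [← Finset.sum_add_distrib, Finset.sum_nat_mod,
    Finset.sum_nat_mod (Finset.univ) 2 (fun i => (((x + x') i) * y i).val)]
  congr 1
  exact Finset.sum_congr rfl fun i _ => key i

lemma chi_zero_left (y : Fin n → ZMod 2) : chi 0 y = 1 := by
  unfold chi; simp

lemma chi_zero_right (x : Fin n → ZMod 2) : chi x 0 = 1 := by
  unfold chi; simp

lemma card_V : Fintype.card (Fin n → ZMod 2) = 2 ^ n := by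
  simp

lemma sum_chi (x : Fin n → ZMod 2) :
    ∑ y : Fin n → ZMod 2, chi x y = if x = 0 then (2 ^ n : ℝ) else 0 := by
  by_cases hx : x = 0
  · subst hx
    simp only [chi_zero_left, Finset.sum_const, Finset.card_univ, card_V, if_true,
      nsmul_eq_mul, mul_one]
    norm_num
  · rw [if_neg hx]
    have hform : ∀ y : Fin n → ZMod 2, chi x y = ∏ i, (-1 : ℝ) ^ ((x i * y i).val) := by
      intro y; unfold chi; rw [← Finset.prod_pow_eq_pow_sum]
    simp_rw [hform]
    rw [← Fintype.prod_sum (f := fun (i : Fin n) (b : ZMod 2) => (-1 : ℝ) ^ ((x i * b).val))]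
    obtain ⟨i0, hi0⟩ : ∃ i0, x i0 ≠ 0 := by
      by_contra h; push_neg at h; exact hx (funext fun i => h i)
    have hx1 : x i0 = 1 := by
      have : ∀ a : ZMod 2, a ≠ 0 → a = 1 := by decide
      exact this _ hi0
    apply Finset.prod_eq_zero (Finset.mem_univ i0)
    have huniv : (Finset.univ : Finset (ZMod 2)) = {0, 1} := by decide
    rw [huniv, Finset.sum_insert (by decide), Finset.sum_singleton, hx1]
    norm_num [ZMod.val_one]

lemma sum_chi_mul (m m' : Fin n → ZMod 2) :
    ∑ y : Fin n → ZMod 2, chi m y * chi m' y = if m = m' then (2 ^ n : ℝ) else 0 := by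
  simp_rw [chi_mul]
  rw [sum_chi]
  have : m + m' = 0 ↔ m = m' := by
    constructor
    · intro h; funext i
      have := congrFun h i
      have h2 : ∀ a b : ZMod 2, a + b = 0 → a = b := by decide
      exact h2 _ _ this
    · rintro rfl; funext i
      have h2 : ∀ a : ZMod 2, a + a = 0 := by decide
      exact h2 _
  simp [this]

end Chi

section Geo
variable {d : ℕ}

noncomputable def stdBasisPt2 (d : ℕ) (i : Fin d) : EuclideanSpace ℝ (Fin (2 * d)) :=
  EuclideanSpace.single ⟨d + i.val, by have := i.2; omega⟩ 1

lemma norm_std_sq (i : Fin d) : ‖stdBasisPt d i‖ ^ 2 = 1 := by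
  unfold stdBasisPt; rw [norm_single_sq]; norm_num

lemma norm_std2_sq (i : Fin d) : ‖stdBasisPt2 d i‖ ^ 2 = 1 := by
  unfold stdBasisPt2; rw [norm_single_sq]; norm_num

lemma norm_std2 (i : Fin d) : ‖stdBasisPt2 d i‖ = 1 := by
  rw [← Real.sqrt_sq (norm_nonneg (stdBasisPt2 d i)), norm_std2_sq, Real.sqrt_one]

lemma inner_std_std2 (i j : Fin d) : ⟪stdBasisPt d i, stdBasisPt2 d j⟫ = 0 := by
  unfold stdBasisPt stdBasisPt2
  rw [inner_single_single', if_neg]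
  intro h
  have h2 := congrArg Fin.val h
  simp only [Fin.coe_castLE] at h2
  have := i.2
  omega

lemma inner_std2_std2 (a b : Fin d) :
    ⟪stdBasisPt2 d a, stdBasisPt2 d b⟫ = if a = b then 1 else 0 := by
  unfold stdBasisPt2
  rw [inner_single_single']
  by_cases h : a = b
  · rw [if_pos h, if_pos (by rw [h]), mul_one]
  · rw [if_neg h, if_neg ?_]
    intro hc
    apply h
    have h2 := congrArg Fin.val hc
    simp only [Fin.val_mk] at h2
    exact Fin.ext (by omega)

lemma dist_std_sq (i : Fin d) (x : EuclideanSpace ℝ (Fin (2 * d))) :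
    ‖stdBasisPt d i - x‖ ^ 2 = 1 - 2 * ⟪stdBasisPt d i, x⟫ + ‖x‖ ^ 2 := by
  rw [norm_sub_sq_real, norm_std_sq]

lemma dist_std_smul_std2 (i : Fin d) (c : ℝ) (j : Fin d) :
    ‖stdBasisPt d i - c • stdBasisPt2 d j‖ ^ 2 = 1 + c ^ 2 := by
  rw [dist_std_sq, real_inner_smul_right, inner_std_std2, norm_smul, mul_pow]
  rw [norm_std2, Real.norm_eq_abs, sq_abs]
  ring

lemma std2_injective : Injective (stdBasisPt2 d) := by
  intro a b h
  by_contra hne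
  have h1 := congrArg (fun v => ⟪stdBasisPt2 d a, v⟫) h
  rw [inner_std2_std2, inner_std2_std2, if_pos rfl, if_neg hne] at h1
  norm_num at h1

end Geo

section Had
variable {d k n : ℕ}

noncomputable def hadC (d : ℕ) {k n : ℕ} (ι : Fin k × (Fin n → ZMod 2) → Fin d)
    (m : Fin n → ZMod 2) (g : Fin k) : EuclideanSpace ℝ (Fin (2 * d)) :=
  ∑ y : Fin n → ZMod 2, ((Real.sqrt (2 ^ n))⁻¹ * chi m y) • stdBasisPt d (ι (g, y))

lemma inner_std_hadC (ι : Fin k × (Fin n → ZMod 2) → Fin d) (hι : Injective ι)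
    (g₀ : Fin k) (y₀ : Fin n → ZMod 2) (m : Fin n → ZMod 2) (g : Fin k) :
    ⟪stdBasisPt d (ι (g₀, y₀)), hadC d ι m g⟫ =
      if g = g₀ then (Real.sqrt (2 ^ n))⁻¹ * chi m y₀ else 0 := by
  unfold hadC stdBasisPt
  rw [inner_sum]
  simp_rw [real_inner_smul_right, inner_single_single', Fin.castLE_inj, hι.eq_iff,
    Prod.mk.injEq, mul_one]
  by_cases hg : g = g₀
  · subst hg
    rw [if_pos rfl]
    rw [Finset.sum_eq_single y₀]
    · simp
    · intro y _ hy
      simp [Ne.symm hy]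
    · simp
  · rw [if_neg hg]
    apply Finset.sum_eq_zero
    intro y _
    have hnot : ¬(g₀ = g ∧ y₀ = y) := by rintro ⟨h, -⟩; exact hg h.symm
    simp [hnot]

lemma inner_hadC_hadC (ι : Fin k × (Fin n → ZMod 2) → Fin d) (hι : Injective ι)
    (m m' : Fin n → ZMod 2) (g g' : Fin k) :
    ⟪hadC d ι m g, hadC d ι m' g'⟫ = if m = m' ∧ g = g' then 1 else 0 := by
  have hpow : (0 : ℝ) < 2 ^ n := by positivity
  unfold hadC
  rw [sum_inner]
  simp_rw [real_inner_smul_left]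
  have hterm : ∀ y : Fin n → ZMod 2,
      ⟪stdBasisPt d (ι (g, y)), ∑ y' : Fin n → ZMod 2,
        ((Real.sqrt (2 ^ n))⁻¹ * chi m' y') • stdBasisPt d (ι (g', y'))⟫ =
      if g' = g then (Real.sqrt (2 ^ n))⁻¹ * chi m' y else 0 := by
    intro y
    exact inner_std_hadC ι hι g y m' g'
  simp_rw [hterm]
  by_cases hg : g' = g
  · have hfac : ∀ y : Fin n → ZMod 2,
        ((Real.sqrt (2 ^ n))⁻¹ * chi m y) *
          (if g' = g then (Real.sqrt (2 ^ n))⁻¹ * chi m' y else 0)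
        = ((Real.sqrt (2 ^ n))⁻¹ * (Real.sqrt (2 ^ n))⁻¹) * (chi m y * chi m' y) := by
      intro y; rw [if_pos hg]; ring
    rw [Finset.sum_congr rfl (fun y _ => hfac y), ← Finset.mul_sum, sum_chi_mul]
    by_cases hm : m = m'
    · rw [if_pos hm, if_pos ⟨hm, hg.symm⟩, ← mul_inv, Real.mul_self_sqrt hpow.le,
        inv_mul_cancel₀ (ne_of_gt hpow)]
    · rw [if_neg hm, if_neg (by tauto), mul_zero]
  · have hnot : ¬(m = m' ∧ g = g') := by
      rintro ⟨-, rfl⟩; exact hg rfl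
    rw [if_neg hnot]
    apply Finset.sum_eq_zero
    intro y _
    rw [if_neg hg, mul_zero]

lemma norm_hadC_sq (ι : Fin k × (Fin n → ZMod 2) → Fin d) (hι : Injective ι)
    (m : Fin n → ZMod 2) (g : Fin k) : ‖hadC d ι m g‖ ^ 2 = 1 := by
  rw [← real_inner_self_eq_norm_sq, inner_hadC_hadC ι hι]
  simp

lemma orthonormal_hadC (ι : Fin k × (Fin n → ZMod 2) → Fin d) (hι : Injective ι) :
    Orthonormal ℝ (fun p : (Fin n → ZMod 2) × Fin k => hadC d ι p.1 p.2) := by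
  rw [orthonormal_iff_ite]
  rintro ⟨m, g⟩ ⟨m', g'⟩
  rw [inner_hadC_hadC ι hι]
  simp [Prod.ext_iff]

lemma hadC_injective (ι : Fin k × (Fin n → ZMod 2) → Fin d) (hι : Injective ι)
    (m : Fin n → ZMod 2) : Injective (hadC d ι m) := by
  intro g g' hgg
  have h1 := inner_std_hadC ι hι g 0 m g
  have h2 := inner_std_hadC ι hι g 0 m g'
  rw [← hgg] at h2
  rw [h1, if_pos rfl] at h2
  by_contra hne
  rw [if_neg (fun h => hne h.symm)] at h2
  rw [chi_zero_right, mul_one] at h2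
  have : Real.sqrt (2 ^ n) ≠ 0 := by positivity
  exact (inv_ne_zero this) h2

end Had

set_option maxHeartbeats 2000000 in
/-- with `q = 1/(36ε²)` a power of two and `d = k·q`, any `ε`-coreset with offset
of `{e_1,…,e_d}` with `t < d` points satisfies `∑ wᵢ‖rᵢ‖ ≥ d/6`. -/
theorem coreset_weighted_norm_lower_bound
    (ε : ℝ) (hε0 : 0 < ε) (hε : ε < 1 / 2)
    (k : ℕ) (hk : 0 < k) (hke : Even k)
    (q : ℕ) (hq0 : 0 < q) (hq2 : ∃ n : ℕ, q = 2 ^ n) (hqε : (q : ℝ) = 1 / (36 * ε ^ 2))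
    (d : ℕ) (hd : d = k * q)
    (t : ℕ) (r : Fin t → EuclideanSpace ℝ (Fin (2 * d))) (w : Fin t → ℝ)
    (hw : ∀ i, 0 < w i) (Δ : ℝ)
    (hcore : IsKMeansCoreset d k t ε r w Δ) (ht : t < d) :
    (d : ℝ) / 6 ≤ ∑ i, w i * ‖r i‖ := by
  classical
  obtain ⟨n, hn⟩ := hq2
  have hk2 : 2 ≤ k := by obtain ⟨c, hc⟩ := hke; omega
  have hdpos : 0 < d := by rw [hd]; exact Nat.mul_pos hk hq0
  have hkd : k ≤ d := by rw [hd]; exact Nat.le_mul_of_pos_right _ hq0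
  have hdR : (0:ℝ) < d := by exact_mod_cast hdpos
  have hq1 : (1:ℝ) ≤ q := by exact_mod_cast hq0
  have hdkq : (d:ℝ) = (k:ℝ) * q := by rw [hd]; push_cast; ring
  set s : ℝ := Real.sqrt q with hsdef
  have hs0 : 0 < s := Real.sqrt_pos.mpr (by linarith)
  have hs2 : s * s = (q:ℝ) := Real.mul_self_sqrt (by linarith)
  have hs1 : 1 ≤ s := by nlinarith
  have h2nq : ((2:ℝ) ^ n) = (q : ℝ) := by rw [hn]; push_cast; ring
  have hsn : Real.sqrt (2 ^ n) = s := by rw [hsdef, h2nq]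
  have hεs : 6 * ε * s = 1 := by
    have h1 : (6 * ε * s) * (6 * ε * s) = 1 := by
      have h36 : (36 * ε ^ 2) * q = 1 := by
        rw [hqε]; field_simp
      nlinarith [hs2]
    have h2 : 0 < 6 * ε * s := by positivity
    have h3 : (6*ε*s - 1) * (6*ε*s + 1) = 0 := by linear_combination h1
    rcases mul_eq_zero.1 h3 with h4 | h4
    · linarith
    · linarith
  have hε6 : ε ≤ 1/6 := by nlinarith [mul_nonneg hε0.le (sub_nonneg.2 hs1)]
  set c : ℝ := s⁻¹ with hcdef
  have hc : s * c = 1 := mul_inv_cancel₀ (ne_of_gt hs0)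
  have hc0 : 0 < c := by rw [hcdef]; positivity
  have hcq : c * q = s := by
    rw [← hs2, hcdef, ← mul_assoc, inv_mul_cancel₀ (ne_of_gt hs0), one_mul]
  -- abbreviations (raw)
  have hN0 : (0:ℝ) ≤ ∑ i, w i * ‖r i‖ :=
    Finset.sum_nonneg fun i _ => mul_nonneg (hw i).le (norm_nonneg _)
  have hW0 : (0:ℝ) ≤ ∑ i, w i := Finset.sum_nonneg fun i _ => (hw i).le
  -- coreset two-sided bounds
  have hcs : ∀ S : Finset (EuclideanSpace ℝ (Fin (2 * d))), S.card = k →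
      (1 - ε) * kmeansCostP d S ≤
        Δ + ∑ i, w i * ⨅ x : S, ‖r i - (x : EuclideanSpace ℝ (Fin (2 * d)))‖ ^ 2 ∧
      Δ + ∑ i, w i * ⨅ x : S, ‖r i - (x : EuclideanSpace ℝ (Fin (2 * d)))‖ ^ 2 ≤
        (1 + ε) * kmeansCostP d S := by
    intro S hS
    have h := hcore S hS
    rw [abs_le] at h
    constructor <;> [linarith [h.2]; linarith [h.1]]
  have hjd : ∀ j : Fin k, (j:ℕ) < d := fun j => lt_of_lt_of_le j.2 hkd
  have hz0 : (0:ℕ) < k := hk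
  -- ##### Step 1 : Y lower bound via S0 #####
  have hYlb : (1 - ε) * d ≤ Δ + ∑ i, w i * ‖r i‖ ^ 2 := by
    set f0 : Fin k → EuclideanSpace ℝ (Fin (2 * d)) :=
      fun j => if j = ⟨0, hk⟩ then 0 else (2:ℝ) • stdBasisPt2 d ⟨j.val, hjd j⟩ with hf0
    have hf0inj : Injective f0 := by
      intro a b hab
      simp only [hf0] at hab
      by_cases ha : a = ⟨0, hk⟩ <;> by_cases hb : b = ⟨0, hk⟩
      · rw [ha, hb]
      · exfalso
        rw [if_pos ha, if_neg hb] at hab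
        have h1 := congrArg norm hab
        rw [norm_zero, norm_smul, norm_std2] at h1
        norm_num at h1
      · exfalso
        rw [if_neg ha, if_pos hb] at hab
        have h1 := congrArg norm hab
        rw [norm_zero, norm_smul, norm_std2] at h1
        norm_num at h1
      · rw [if_neg ha, if_neg hb] at hab
        have h2 := smul_right_injective (EuclideanSpace ℝ (Fin (2 * d)))
          (two_ne_zero) hab
        have h3 := std2_injective h2
        have h4 := congrArg Fin.val h3
        simp only [Fin.val_mk] at h4
        exact Fin.ext h4
    set S0 : Finset (EuclideanSpace ℝ (Fin (2 * d))) := Finset.image f0 Finset.univ with hS0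
    have hS0card : S0.card = k := by
      rw [hS0, Finset.card_image_of_injective _ hf0inj, Finset.card_univ, Fintype.card_fin]
    have h0mem : (0 : EuclideanSpace ℝ (Fin (2 * d))) ∈ S0 := by
      rw [hS0]
      refine Finset.mem_image.2 ⟨⟨0, hk⟩, Finset.mem_univ _, ?_⟩
      simp only [hf0, if_pos rfl]
    have hS0ne : S0.Nonempty := ⟨0, h0mem⟩
    have hS0point : ∀ i : Fin d,
        (⨅ x : S0, ‖stdBasisPt d i - (x : EuclideanSpace ℝ (Fin (2 * d)))‖ ^ 2) = 1 := by
      intro i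
      refine iInf_finset_eq S0 (fun v => ‖stdBasisPt d i - v‖ ^ 2) hS0ne ?_ ?_
      · intro x hx
        obtain ⟨j, -, rfl⟩ := Finset.mem_image.1 hx
        simp only [hf0]
        by_cases hj : j = ⟨0, hk⟩
        · rw [if_pos hj, sub_zero, norm_std_sq]
        · rw [if_neg hj, dist_std_smul_std2]
          nlinarith
      · refine ⟨0, h0mem, ?_⟩
        show ‖stdBasisPt d i - 0‖ ^ 2 ≤ 1
        rw [sub_zero, norm_std_sq]
    have hcost0 : kmeansCostP d S0 = d := by
      unfold kmeansCostP
      rw [Finset.sum_congr rfl fun i _ => hS0point i]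
      simp
    obtain ⟨h1, -⟩ := hcs S0 hS0card
    rw [hcost0] at h1
    have h3 : ∑ i, w i * ⨅ x : S0, ‖r i - (x : EuclideanSpace ℝ (Fin (2 * d)))‖ ^ 2 ≤
        ∑ i, w i * ‖r i‖ ^ 2 := by
      refine Finset.sum_le_sum fun i _ => mul_le_mul_of_nonneg_left ?_ (hw i).le
      have h4 := iInf_finset_le S0 (fun v => ‖r i - v‖ ^ 2) h0mem
      simpa using h4
    linarith
  have hY0 : (0:ℝ) ≤ Δ + ∑ i, w i * ‖r i‖ ^ 2 := le_trans (by nlinarith) hYlb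
  -- ##### Step 2 : W lower bound with parameter R #####
  have hWlb : ∀ R : ℝ, 1 ≤ R →
      (1 - ε) * ((d:ℝ) * (1 + R ^ 2)) ≤
        (Δ + ∑ i, w i * ‖r i‖ ^ 2) + 2 * R * (∑ i, w i * ‖r i‖) + (∑ i, w i) * R ^ 2 := by
    intro R hR1
    have hR0 : 0 < R := by linarith
    set u0 : EuclideanSpace ℝ (Fin (2 * d)) := stdBasisPt2 d ⟨0, hdpos⟩ with hu0
    set fR : Fin k → EuclideanSpace ℝ (Fin (2 * d)) :=
      fun j => if j = ⟨0, hk⟩ then R • u0 else (R + 3) • stdBasisPt2 d ⟨j.val, hjd j⟩ with hfR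
    have hfRinj : Injective fR := by
      intro a b hab
      simp only [hfR] at hab
      by_cases ha : a = ⟨0, hk⟩ <;> by_cases hb : b = ⟨0, hk⟩
      · rw [ha, hb]
      · exfalso
        rw [if_pos ha, if_neg hb] at hab
        have h1 := congrArg (fun v => ⟪u0, v⟫) hab
        simp only [real_inner_smul_right, hu0] at h1
        rw [inner_std2_std2, inner_std2_std2, if_pos rfl, if_neg ?_] at h1
        · norm_num at h1; linarith
        · intro hcon
          have h5 := congrArg Fin.val hcon
          simp only [Fin.val_mk] at h5
          have h6 : b.val ≠ 0 := fun h7 => hb (Fin.ext h7)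
          omega
      · exfalso
        rw [if_neg ha, if_pos hb] at hab
        have h1 := congrArg (fun v => ⟪u0, v⟫) hab
        simp only [real_inner_smul_right, hu0] at h1
        rw [inner_std2_std2, inner_std2_std2, if_pos rfl, if_neg ?_] at h1
        · norm_num at h1; linarith
        · intro hcon
          have h5 := congrArg Fin.val hcon
          simp only [Fin.val_mk] at h5
          have h6 : a.val ≠ 0 := fun h7 => ha (Fin.ext h7)
          omega
      · rw [if_neg ha, if_neg hb] at hab
        have h2 := smul_right_injective (EuclideanSpace ℝ (Fin (2 * d)))
          (by intro hcon; linarith [hcon] : (R + 3) ≠ 0) hab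
        have h3 := std2_injective h2
        have h4 := congrArg Fin.val h3
        simp only [Fin.val_mk] at h4
        exact Fin.ext h4
    set SR : Finset (EuclideanSpace ℝ (Fin (2 * d))) := Finset.image fR Finset.univ with hSR
    have hSRcard : SR.card = k := by
      rw [hSR, Finset.card_image_of_injective _ hfRinj, Finset.card_univ, Fintype.card_fin]
    have hmemR : R • u0 ∈ SR := by
      rw [hSR]
      refine Finset.mem_image.2 ⟨⟨0, hk⟩, Finset.mem_univ _, ?_⟩
      simp only [hfR, if_pos rfl]
    have hSRne : SR.Nonempty := ⟨_, hmemR⟩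
    have hSRpoint : ∀ i : Fin d,
        (⨅ x : SR, ‖stdBasisPt d i - (x : EuclideanSpace ℝ (Fin (2 * d)))‖ ^ 2) = 1 + R ^ 2 := by
      intro i
      refine iInf_finset_eq SR (fun v => ‖stdBasisPt d i - v‖ ^ 2) hSRne ?_ ?_
      · intro x hx
        obtain ⟨j, -, rfl⟩ := Finset.mem_image.1 hx
        simp only [hfR]
        by_cases hj : j = ⟨0, hk⟩
        · rw [if_pos hj, hu0, dist_std_smul_std2]
        · rw [if_neg hj, dist_std_smul_std2]
          nlinarith
      · refine ⟨R • u0, hmemR, ?_⟩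
        show ‖stdBasisPt d i - R • u0‖ ^ 2 ≤ 1 + R ^ 2
        rw [hu0, dist_std_smul_std2]
    have hcostR : kmeansCostP d SR = d * (1 + R ^ 2) := by
      unfold kmeansCostP
      rw [Finset.sum_congr rfl fun i _ => hSRpoint i]
      rw [Finset.sum_const, Finset.card_univ, Fintype.card_fin, nsmul_eq_mul]
    obtain ⟨h1, -⟩ := hcs SR hSRcard
    rw [hcostR] at h1
    have h3 : ∑ i, w i * ⨅ x : SR, ‖r i - (x : EuclideanSpace ℝ (Fin (2 * d)))‖ ^ 2 ≤
        (∑ i, w i * ‖r i‖ ^ 2) + 2 * R * (∑ i, w i * ‖r i‖) + (∑ i, w i) * R ^ 2 := by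
      have h4 : ∀ i, w i * ⨅ x : SR, ‖r i - (x : EuclideanSpace ℝ (Fin (2 * d)))‖ ^ 2 ≤
          w i * ‖r i‖ ^ 2 + 2 * R * (w i * ‖r i‖) + w i * R ^ 2 := by
        intro i
        have h5 := iInf_finset_le SR (fun v => ‖r i - v‖ ^ 2) hmemR
        have h6 : ‖r i - R • u0‖ ^ 2 ≤ ‖r i‖ ^ 2 + 2 * R * ‖r i‖ + R ^ 2 := by
          rw [norm_sub_sq_real, real_inner_smul_right, norm_smul, mul_pow,
            Real.norm_eq_abs, sq_abs]
          have h7 : |⟪r i, u0⟫| ≤ ‖r i‖ := by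
            have := abs_real_inner_le_norm (r i) u0
            rw [hu0, norm_std2, mul_one] at this
            exact this
          have h8 : ‖u0‖ = 1 := by rw [hu0, norm_std2]
          rw [h8]
          have h9 : -⟪r i, u0⟫ ≤ ‖r i‖ := by
            rcases abs_le.1 h7 with ⟨hl, -⟩; linarith
          nlinarith [hR0]
        have h10 : (⨅ x : SR, ‖r i - (x : EuclideanSpace ℝ (Fin (2 * d)))‖ ^ 2) ≤
            ‖r i‖ ^ 2 + 2 * R * ‖r i‖ + R ^ 2 := le_trans h5 h6
        nlinarith [(hw i).le, h10, norm_nonneg (r i), sq_nonneg R]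
      calc ∑ i, w i * ⨅ x : SR, ‖r i - (x : EuclideanSpace ℝ (Fin (2 * d)))‖ ^ 2
          ≤ ∑ i, (w i * ‖r i‖ ^ 2 + 2 * R * (w i * ‖r i‖) + w i * R ^ 2) :=
            Finset.sum_le_sum fun i _ => h4 i
        _ = (∑ i, w i * ‖r i‖ ^ 2) + 2 * R * (∑ i, w i * ‖r i‖) + (∑ i, w i) * R ^ 2 := by
            rw [Finset.sum_add_distrib, Finset.sum_add_distrib, ← Finset.mul_sum,
              Finset.sum_mul]
    linarith
  -- ##### Step 3 : Hadamard solutions #####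
  have hcardV : Fintype.card (Fin n → ZMod 2) = q := by
    rw [card_V]; omega
  let ι : Fin k × (Fin n → ZMod 2) ≃ Fin d :=
    ((Equiv.refl (Fin k)).prodCongr (Fintype.equivFinOfCardEq hcardV)).trans
      ((finProdFinEquiv).trans (finCongr hd.symm))
  set B : Fin t → (Fin n → ZMod 2) → ℝ :=
    fun i m => Real.sqrt (∑ g : Fin k, (⟪r i, hadC d (⇑ι) m g⟫) ^ 2) with hB
  have hKey : ∀ m : Fin n → ZMod 2,
      (Δ + ∑ i, w i * ‖r i‖ ^ 2) + (∑ i, w i) - 2 * (∑ i, w i * B i m) ≤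
        (1 + ε) * ((k:ℝ) * (2 * q - c * ((if m = 0 then (q:ℝ) else 0) + q))) := by
    intro m
    set Sm : Finset (EuclideanSpace ℝ (Fin (2 * d))) :=
      Finset.image (hadC d (⇑ι) m) Finset.univ with hSm
    have hSmcard : Sm.card = k := by
      rw [hSm, Finset.card_image_of_injective _ (hadC_injective (⇑ι) ι.injective m),
        Finset.card_univ, Fintype.card_fin]
    have hSmne : Sm.Nonempty :=
      ⟨_, Finset.mem_image_of_mem _ (Finset.mem_univ (⟨0, hk⟩ : Fin k))⟩
    have hdist : ∀ (i : Fin d) (g : Fin k),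
        ‖stdBasisPt d i - hadC d (⇑ι) m g‖ ^ 2
          = 2 - 2 * (if g = (ι.symm i).1 then c * chi m (ι.symm i).2 else 0) := by
      intro i g
      have hι2 : ι ((ι.symm i).1, (ι.symm i).2) = i := by
        rw [Prod.mk.eta, Equiv.apply_symm_apply]
      rw [show stdBasisPt d i = stdBasisPt d (ι ((ι.symm i).1, (ι.symm i).2)) from by
        rw [hι2]]
      rw [dist_std_sq, norm_hadC_sq (⇑ι) ι.injective,
        inner_std_hadC (⇑ι) ι.injective _ _ m g, hsn]
      by_cases hg : g = (ι.symm i).1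
      · rw [if_pos hg]
        try rw [hcdef]
        ring
      · rw [if_neg hg]; ring
    have hpoint : ∀ i : Fin d,
        (⨅ x : Sm, ‖stdBasisPt d i - (x : EuclideanSpace ℝ (Fin (2 * d)))‖ ^ 2)
          = 2 - c * (chi m (ι.symm i).2 + 1) := by
      intro i
      rcases chi_eq_one_or m (ι.symm i).2 with hχ | hχ
      · refine iInf_finset_eq Sm (fun v => ‖stdBasisPt d i - v‖ ^ 2) hSmne ?_ ?_
        · intro x hx
          obtain ⟨g, -, rfl⟩ := Finset.mem_image.1 hx
          show 2 - c * (chi m (ι.symm i).2 + 1) ≤ ‖stdBasisPt d i - hadC d (⇑ι) m g‖ ^ 2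
          rw [hdist i g, hχ]
          by_cases hg : g = (ι.symm i).1
          · rw [if_pos hg]; nlinarith [hc0]
          · rw [if_neg hg]; nlinarith [hc0]
        · refine ⟨hadC d (⇑ι) m (ι.symm i).1,
            Finset.mem_image_of_mem _ (Finset.mem_univ _), ?_⟩
          show ‖stdBasisPt d i - hadC d (⇑ι) m (ι.symm i).1‖ ^ 2
            ≤ 2 - c * (chi m (ι.symm i).2 + 1)
          rw [hdist i _, hχ, if_pos rfl]
          have : 2 - 2 * (c * 1) = 2 - c * (1 + 1) := by ring
          linarith [this.le]
      · obtain ⟨g₁, hg₁⟩ : ∃ g₁ : Fin k, g₁ ≠ (ι.symm i).1 := by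
          rcases Nat.lt_or_ge 0 ((ι.symm i).1).val with h | h
          · exact ⟨⟨0, hk⟩, by
              intro hcon; have := congrArg Fin.val hcon; simp only [Fin.val_mk] at this; omega⟩
          · exact ⟨⟨1, by omega⟩, by
              intro hcon; have := congrArg Fin.val hcon; simp only [Fin.val_mk] at this; omega⟩
        refine iInf_finset_eq Sm (fun v => ‖stdBasisPt d i - v‖ ^ 2) hSmne ?_ ?_
        · intro x hx
          obtain ⟨g, -, rfl⟩ := Finset.mem_image.1 hx
          show 2 - c * (chi m (ι.symm i).2 + 1) ≤ ‖stdBasisPt d i - hadC d (⇑ι) m g‖ ^ 2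
          rw [hdist i g, hχ]
          by_cases hg : g = (ι.symm i).1
          · rw [if_pos hg]; nlinarith [hc0]
          · rw [if_neg hg]; nlinarith [hc0]
        · refine ⟨hadC d (⇑ι) m g₁, Finset.mem_image_of_mem _ (Finset.mem_univ _), ?_⟩
          show ‖stdBasisPt d i - hadC d (⇑ι) m g₁‖ ^ 2 ≤ 2 - c * (chi m (ι.symm i).2 + 1)
          rw [hdist i _, hχ, if_neg hg₁]
          nlinarith [hc0]
    have hcostm : kmeansCostP d Sm
        = (k:ℝ) * (2 * q - c * ((if m = 0 then (q:ℝ) else 0) + q)) := by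
      unfold kmeansCostP
      rw [Finset.sum_congr rfl fun i _ => hpoint i]
      have hre : ∑ i : Fin d, ((2:ℝ) - c * (chi m (ι.symm i).2 + 1))
          = ∑ p : Fin k × (Fin n → ZMod 2), ((2:ℝ) - c * (chi m p.2 + 1)) :=
        Equiv.sum_comp ι.symm (fun p : Fin k × (Fin n → ZMod 2) =>
          (2:ℝ) - c * (chi m p.2 + 1))
      rw [hre, Fintype.sum_prod_type]
      have hin : ∀ g : Fin k, (∑ y : Fin n → ZMod 2, ((2:ℝ) - c * (chi m y + 1)))
          = 2 * q - c * ((if m = 0 then (q:ℝ) else 0) + q) := by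
        intro g
        rw [Finset.sum_sub_distrib, ← Finset.mul_sum, Finset.sum_add_distrib, sum_chi,
          Finset.sum_const, Finset.sum_const, Finset.card_univ, hcardV, h2nq,
          nsmul_eq_mul, nsmul_eq_mul]
        ring
      rw [Finset.sum_congr rfl fun g _ => hin g, Finset.sum_const, Finset.card_univ,
        Fintype.card_fin, nsmul_eq_mul]
    obtain ⟨-, h2⟩ := hcs Sm hSmcard
    rw [hcostm] at h2
    have h3 : ∀ i : Fin t, ‖r i‖ ^ 2 + 1 - 2 * B i m ≤
        ⨅ x : Sm, ‖r i - (x : EuclideanSpace ℝ (Fin (2 * d)))‖ ^ 2 := by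
      intro i
      refine le_iInf_finset Sm (fun v => ‖r i - v‖ ^ 2) hSmne ?_
      intro x hx
      obtain ⟨g, -, rfl⟩ := Finset.mem_image.1 hx
      show ‖r i‖ ^ 2 + 1 - 2 * B i m ≤ ‖r i - hadC d (⇑ι) m g‖ ^ 2
      have hd2 : ‖r i - hadC d (⇑ι) m g‖ ^ 2
          = ‖r i‖ ^ 2 - 2 * ⟪r i, hadC d (⇑ι) m g⟫ + 1 := by
        rw [norm_sub_sq_real, norm_hadC_sq (⇑ι) ι.injective]
      have hble : ⟪r i, hadC d (⇑ι) m g⟫ ≤ B i m := by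
        have h5 : (⟪r i, hadC d (⇑ι) m g⟫) ^ 2 ≤
            ∑ g' : Fin k, (⟪r i, hadC d (⇑ι) m g'⟫) ^ 2 :=
          Finset.single_le_sum (f := fun g' : Fin k => (⟪r i, hadC d (⇑ι) m g'⟫ : ℝ) ^ 2)
            (fun g' _ => sq_nonneg _) (Finset.mem_univ g)
        have h6 : ⟪r i, hadC d (⇑ι) m g⟫ ≤ |⟪r i, hadC d (⇑ι) m g⟫| := le_abs_self _
        have h7 := Real.sqrt_le_sqrt h5
        rw [Real.sqrt_sq_eq_abs] at h7
        simp only [hB]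
        exact le_trans h6 h7
      rw [hd2]; linarith
    have h4 : Δ + ∑ i, w i * (‖r i‖ ^ 2 + 1 - 2 * B i m) ≤
        Δ + ∑ i, w i * ⨅ x : Sm, ‖r i - (x : EuclideanSpace ℝ (Fin (2 * d)))‖ ^ 2 :=
      add_le_add_right (Finset.sum_le_sum fun i _ =>
        mul_le_mul_of_nonneg_left (h3 i) (hw i).le) Δ
    have h5 : ∑ i, w i * (‖r i‖ ^ 2 + 1 - 2 * B i m)
        = (∑ i, w i * ‖r i‖ ^ 2) + (∑ i, w i) - 2 * (∑ i, w i * B i m) := by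
      rw [Finset.mul_sum, ← Finset.sum_add_distrib, ← Finset.sum_sub_distrib]
      exact Finset.sum_congr rfl fun i _ => by ring
    linarith
  -- Bessel bound
  have hBsum : ∀ i : Fin t, (∑ m : Fin n → ZMod 2, B i m) ≤ s * ‖r i‖ := by
    intro i
    have hb2 : ∀ m, (B i m) ^ 2 = ∑ g : Fin k, (⟪r i, hadC d (⇑ι) m g⟫) ^ 2 := by
      intro m
      simp only [hB]
      exact Real.sq_sqrt (Finset.sum_nonneg fun g _ => sq_nonneg _)
    have hbes : (∑ m : Fin n → ZMod 2, ∑ g : Fin k, (⟪r i, hadC d (⇑ι) m g⟫) ^ 2)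
        ≤ ‖r i‖ ^ 2 := by
      have horth := orthonormal_hadC (⇑ι) ι.injective
      have h := horth.sum_inner_products_le (𝕜 := ℝ) (x := r i) (s := Finset.univ)
      rw [Fintype.sum_prod_type] at h
      calc (∑ m : Fin n → ZMod 2, ∑ g : Fin k, (⟪r i, hadC d (⇑ι) m g⟫) ^ 2)
          = ∑ m : Fin n → ZMod 2, ∑ g : Fin k,
              ‖⟪hadC d (⇑ι) m g, r i⟫‖ ^ 2 := by
            refine Finset.sum_congr rfl fun m _ => Finset.sum_congr rfl fun g _ => ?_
            rw [real_inner_comm, Real.norm_eq_abs, sq_abs]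
        _ ≤ ‖r i‖ ^ 2 := h
    have h1 : (∑ m : Fin n → ZMod 2, B i m) ^ 2 ≤
        (q:ℝ) * ∑ m : Fin n → ZMod 2, (B i m) ^ 2 := by
      have h2 := sq_sum_le_card_mul_sum_sq
        (s := (Finset.univ : Finset (Fin n → ZMod 2))) (f := B i)
      rw [Finset.card_univ, hcardV] at h2
      exact_mod_cast h2
    have h3 : (∑ m : Fin n → ZMod 2, (B i m) ^ 2) ≤ ‖r i‖ ^ 2 := by
      rw [Finset.sum_congr rfl fun m _ => hb2 m]
      exact hbes
    have h4 : 0 ≤ ∑ m : Fin n → ZMod 2, B i m :=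
      Finset.sum_nonneg fun m _ => by simp only [hB]; exact Real.sqrt_nonneg _
    nlinarith [mul_nonneg hs0.le (norm_nonneg (r i)), hs2, h1, h3, h4, norm_nonneg (r i)]
  -- sum over m
  have hsum : (∑ m : Fin n → ZMod 2,
      ((Δ + ∑ i, w i * ‖r i‖ ^ 2) + (∑ i, w i) - 2 * (∑ i, w i * B i m)))
      ≤ ∑ m : Fin n → ZMod 2,
        (1 + ε) * ((k:ℝ) * (2 * q - c * ((if m = 0 then (q:ℝ) else 0) + q))) :=
    Finset.sum_le_sum fun m _ => hKey m
  have hL : (∑ m : Fin n → ZMod 2,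
      ((Δ + ∑ i, w i * ‖r i‖ ^ 2) + (∑ i, w i) - 2 * (∑ i, w i * B i m)))
      = (q:ℝ) * ((Δ + ∑ i, w i * ‖r i‖ ^ 2) + (∑ i, w i))
        - 2 * (∑ i, w i * (∑ m : Fin n → ZMod 2, B i m)) := by
    rw [Finset.sum_sub_distrib, Finset.sum_const, Finset.card_univ, hcardV, nsmul_eq_mul]
    congr 1
    rw [← Finset.mul_sum, Finset.sum_comm]
    congr 1
    exact Finset.sum_congr rfl fun i _ => (Finset.mul_sum _ _ _).symm
  have hR2 : (∑ m : Fin n → ZMod 2,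
      (1 + ε) * ((k:ℝ) * (2 * q - c * ((if m = 0 then (q:ℝ) else 0) + q))))
      = (1 + ε) * (2 * d * q - d * c - d * s) := by
    rw [← Finset.mul_sum, ← Finset.mul_sum]
    have hmid : (∑ m : Fin n → ZMod 2,
        ((2:ℝ) * q - c * ((if m = 0 then (q:ℝ) else 0) + q)))
        = 2 * q * q - c * (q + q * q) := by
      rw [Finset.sum_sub_distrib, Finset.sum_const, Finset.card_univ, hcardV, nsmul_eq_mul,
        ← Finset.mul_sum, Finset.sum_add_distrib, Finset.sum_const, Finset.card_univ,
        hcardV, nsmul_eq_mul, Finset.sum_ite_eq' Finset.univ (0 : Fin n → ZMod 2)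
          (fun _ => (q:ℝ))]
      simp only [Finset.mem_univ, if_true]
      ring
    rw [hmid]
    have he : (k:ℝ) * (2 * q * q - c * (q + q * q)) = 2 * d * q - d * c - d * s := by
      have e1 : (k:ℝ) * q = d := hdkq.symm
      linear_combination (2 * (q:ℝ) - c - c * q) * e1 - (d:ℝ) * hcq
    rw [he]
  have hMainE : (q:ℝ) * ((Δ + ∑ i, w i * ‖r i‖ ^ 2) + (∑ i, w i))
      - 2 * (s * (∑ i, w i * ‖r i‖)) ≤ (1 + ε) * (2 * d * q - d * c - d * s) := by
    rw [hL, hR2] at hsum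
    have h6 : (∑ i, w i * (∑ m : Fin n → ZMod 2, B i m)) ≤ ∑ i, w i * (s * ‖r i‖) :=
      Finset.sum_le_sum fun i _ => mul_le_mul_of_nonneg_left (hBsum i) (hw i).le
    have h7 : (∑ i, w i * (s * ‖r i‖)) = s * ∑ i, w i * ‖r i‖ := by
      rw [Finset.mul_sum]
      exact Finset.sum_congr rfl fun i _ => by ring
    linarith
  -- ##### Step 4 : W lower bound #####
  set Rv : ℝ := 12 * (q:ℝ) * ((Δ + ∑ i, w i * ‖r i‖ ^ 2)
      + 2 * (∑ i, w i * ‖r i‖) + d) / d with hRv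
  have hRd : Rv * d = 12 * q * ((Δ + ∑ i, w i * ‖r i‖ ^ 2)
      + 2 * (∑ i, w i * ‖r i‖) + d) := by
    rw [hRv]; field_simp
  have hq0' : (0:ℝ) ≤ q := by linarith
  have hRv1 : 1 ≤ Rv := by
    rw [hRv, le_div_iff₀ hdR]
    linarith [hRd, mul_nonneg hq0' hY0, mul_nonneg hq0' hN0,
      mul_le_mul_of_nonneg_right hq1 hdR.le]
  have hWR := hWlb Rv hRv1
  have hRv0 : 0 ≤ Rv := by linarith
  have hRvd0 : 0 ≤ Rv * d := by
    linarith [hRd, mul_nonneg hq0' hY0, mul_nonneg hq0' hN0, mul_nonneg hq0' hdR.le]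
  have hA1 : 12 * q * (Δ + ∑ i, w i * ‖r i‖ ^ 2) ≤ Rv * d := by
    linarith [hRd, mul_nonneg hq0' hN0, mul_nonneg hq0' hdR.le]
  have hA2 : 12 * q * (Δ + ∑ i, w i * ‖r i‖ ^ 2) ≤ Rv ^ 2 * d := by
    have hx := mul_nonneg (sub_nonneg.2 hRv1) hRvd0
    nlinarith [hA1, hx]
  have hB1 : 24 * q * (∑ i, w i * ‖r i‖) ≤ Rv * d := by
    linarith [hRd, mul_nonneg hq0' hY0, mul_nonneg hq0' hdR.le]
  have hB2 : 24 * q * ((∑ i, w i * ‖r i‖) * Rv) ≤ Rv ^ 2 * d := by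
    have hx := mul_le_mul_of_nonneg_right hB1 hRv0
    nlinarith [hx]
  have hW6 : 6 * q * ((1 - ε) * d) - d ≤ 6 * q * (∑ i, w i) := by
    have hWR6 : 6 * (q:ℝ) * ((1 - ε) * ((d:ℝ) * (1 + Rv ^ 2))) ≤
        6 * q * ((Δ + ∑ i, w i * ‖r i‖ ^ 2) + 2 * Rv * (∑ i, w i * ‖r i‖)
          + (∑ i, w i) * Rv ^ 2) :=
      mul_le_mul_of_nonneg_left hWR (by positivity)
    have hgd : (0:ℝ) ≤ 6 * q * ((1 - ε) * d) :=
      mul_nonneg (by positivity) (mul_nonneg (by linarith) hdR.le)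
    have h8 : 0 ≤ (6 * q * (∑ i, w i) - (6 * q * ((1 - ε) * d) - d)) * Rv ^ 2 := by
      nlinarith [hWR6, hA2, hB2, hgd]
    by_contra hcon
    push_neg at hcon
    have hRv2 : 0 < Rv ^ 2 := by positivity
    nlinarith [h8, mul_pos (by linarith : (0:ℝ) < (6 * q * ((1 - ε) * d) - d)
      - 6 * q * (∑ i, w i)) hRv2]
  -- ##### Step 5 : conclude #####
  have hqY : (q:ℝ) * ((1 - ε) * d) ≤ q * (Δ + ∑ i, w i * ‖r i‖ ^ 2) :=
    mul_le_mul_of_nonneg_left hYlb (by linarith)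
  have hεq : 6 * ε * q = s := by
    rw [← hs2]; linear_combination s * hεs
  have hεqd : 6 * ε * (q:ℝ) * d = s * d := by linear_combination (d:ℝ) * hεq
  have hεsd : 6 * ε * s * (d:ℝ) = d := by linear_combination (d:ℝ) * hεs
  have h2sN : s * d / 3 ≤ 2 * (s * (∑ i, w i * ‖r i‖)) := by
    linarith [hMainE, hqY, hW6, hεqd, hεsd, mul_pos hdR hc0,
      mul_nonneg (mul_nonneg hε0.le hdR.le) hc0.le]
  by_contra hcon
  push_neg at hcon
  linarith [h2sN, mul_pos hs0 (by linarith : (0:ℝ) < (d:ℝ) / 6 - ∑ i, w i * ‖r i‖)]
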